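/- Let H ∈ ℝ^{m × T}, let h_0, h_1, …, h_N ∈ ℝ^m, let U_0 = {u ∈ ℝ^T | Hu ≤ h_0} and U_i = {u ∈ ℝ^T | Hu ≤ h_i} for i = 1, …, N. Suppose there exist vectors γ_i ∈ ℝ^T, matrices Γ_i ∈ ℝ^{T×T}, and matrices Λ_i ∈ ℝ^{m×m} for i = 1, …, N such that for every i: Λ_i ≥ 0, Λ_i H = H Γ_i, and Λ_i h_0 ≤ h_i − H γ_i. Set p̄ = Σ_{i=1}^N γ_i and P = Σ_{i=1}^N Γ_i, and suppose P is invertible. Then for every u ∈ p̄ + P U_0, the disaggregated profiles u_i := γ_i + Γ_i P^{−1}(u − p̄) satisfy u_i ∈ U_i for each i = 1, …, N, and Σ_{i=1}^N u_i = u. -/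
import Mathlib


/-- **Disaggregation with invertible `P`.** Under the conditions of Theorem 1 and
with `P` invertible, every `u ∈ p̄ + P 𝕌₀` yields feasible disaggregated profiles
`uᵢ := γᵢ + Γᵢ P⁻¹ (u - p̄) ∈ 𝕌ᵢ` that sum to `u`. -/
theorem disaggregation_explicit
    {m T N : ℕ}
    (H : Matrix (Fin m) (Fin T) ℝ) (h₀ : Fin m → ℝ) (h : Fin N → Fin m → ℝ)
    (U₀ : Set (Fin T → ℝ)) (hU₀ : U₀ = {u | H.mulVec u ≤ h₀})
    (Ui : Fin N → Set (Fin T → ℝ)) (hUi : ∀ i, Ui i = {u | H.mulVec u ≤ h i})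
    (γ : Fin N → Fin T → ℝ) (Γ : Fin N → Matrix (Fin T) (Fin T) ℝ)
    (Λ : Fin N → Matrix (Fin m) (Fin m) ℝ)
    (hΛpos : ∀ i, ∀ k l, 0 ≤ Λ i k l)
    (hΛH : ∀ i, Λ i * H = H * Γ i)
    (hΛh : ∀ i, (Λ i).mulVec h₀ ≤ h i - H.mulVec (γ i))
    (pbar : Fin T → ℝ) (P : Matrix (Fin T) (Fin T) ℝ)
    (hpbar : pbar = ∑ i, γ i) (hP : P = ∑ i, Γ i)
    (hPinv : IsUnit P)
    (u : Fin T → ℝ) (hu : u ∈ (fun v => pbar + P.mulVec v) '' U₀) :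
    (∀ i, γ i + (Γ i).mulVec (P⁻¹.mulVec (u - pbar)) ∈ Ui i) ∧
      ∑ i, (γ i + (Γ i).mulVec (P⁻¹.mulVec (u - pbar))) = u := by
  obtain ⟨v, hv, huv⟩ := hu
  rw [hU₀] at hv
  have hdet : IsUnit P.det := (Matrix.isUnit_iff_isUnit_det P).mp hPinv
  have hkey : P⁻¹.mulVec (u - pbar) = v := by
    rw [← huv]
    simp only [add_sub_cancel_left, Matrix.mulVec_mulVec,
      Matrix.nonsing_inv_mul P hdet, Matrix.one_mulVec]
  rw [hkey]
  constructor
  · intro i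
    rw [hUi i]
    have hmono : (Λ i).mulVec (H.mulVec v) ≤ (Λ i).mulVec h₀ := by
      intro k
      simp only [Matrix.mulVec, dotProduct]
      exact Finset.sum_le_sum fun l _ =>
        mul_le_mul_of_nonneg_left (hv l) (hΛpos i k l)
    have h1 : H.mulVec ((Γ i).mulVec v) = (Λ i).mulVec (H.mulVec v) := by
      rw [Matrix.mulVec_mulVec, Matrix.mulVec_mulVec, hΛH i]
    have h2 := hΛh i
    show H.mulVec (γ i + (Γ i).mulVec v) ≤ h i
    rw [Matrix.mulVec_add]
    intro k
    have := le_trans (hmono k) (h2 k)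
    simp only [Pi.add_apply, Pi.sub_apply] at *
    have := h1 ▸ this
    linarith [congrFun h1 k]
  · rw [← huv]
    have : ∑ i, (γ i + (Γ i).mulVec v) = (∑ i, γ i) + ∑ i, (Γ i).mulVec v := by
      rw [Finset.sum_add_distrib]
    rw [this, ← hpbar]
    congr 1
    rw [hP]; ext k; simp only [Matrix.mulVec, dotProduct, Finset.sum_apply, Matrix.sum_apply, Finset.sum_mul]; exact Finset.sum_comm
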